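/- arXiv:2410.12441 — 2 statements merged into one kernel-verified Lean document; each statement's English description precedes it below -/
import Mathlib

section
/- Let h(p) = max(p, αp) be the leaky ReLU with slope 0 < α < 1 and C = {(p,q) ∈ ℝ² : h(p) ≤ q}. Then the Euclidean projection of (p̄,q̄) onto C is: (p̄,q̄) if h(p̄) ≤ q̄; ((p̄+q̄)/2, (p̄+q̄)/2) if |q̄| ≤ p̄; ((p̄+αq̄)/(1+α²), α(p̄+αq̄)/(1+α²)) if q̄ ≤ α p̄ and p̄ ≤ -α q̄; and (0,0) otherwise. -/
open scoped Classical

lemma proj_aux (w1 w2 pbar qbar p q : ℝ)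
    (h : 0 ≤ (w1 - pbar) * (p - w1) + (w2 - qbar) * (q - w2)) :
    (w1 - pbar) ^ 2 + (w2 - qbar) ^ 2 ≤ (p - pbar) ^ 2 + (q - qbar) ^ 2 := by
  nlinarith [sq_nonneg (p - w1), sq_nonneg (q - w2)]

/-- Epigraphical projection of the leaky ReLU `h p = max p (α p)`, `0 < α < 1`:
the given piecewise formula is the Euclidean projection onto `C = {(p,q) : h p ≤ q}`. -/
theorem leaky_relu_epigraph_projection (α : ℝ) (hα0 : 0 < α) (hα1 : α < 1)
    (pbar qbar : ℝ) :
    let w : ℝ × ℝ :=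
      if max pbar (α * pbar) ≤ qbar then (pbar, qbar)
      else if |qbar| ≤ pbar then ((pbar + qbar) / 2, (pbar + qbar) / 2)
      else if qbar ≤ α * pbar ∧ pbar ≤ -(α * qbar) then
        ((pbar + α * qbar) / (1 + α ^ 2), α * (pbar + α * qbar) / (1 + α ^ 2))
      else (0, 0)
    max w.1 (α * w.1) ≤ w.2 ∧
      ∀ p q : ℝ, max p (α * p) ≤ q →
        (w.1 - pbar) ^ 2 + (w.2 - qbar) ^ 2 ≤ (p - pbar) ^ 2 + (q - qbar) ^ 2 := by
  intro w
  have hden : (0:ℝ) < 1 + α ^ 2 := by positivity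
  show max w.1 (α * w.1) ≤ w.2 ∧ _
  unfold w
  split_ifs with h1 h2 h3
  · -- case 1 : already feasible
    refine ⟨h1, fun p q hpq => ?_⟩
    simp only
    nlinarith [sq_nonneg (p - pbar), sq_nonneg (q - qbar)]
  · -- case 2 : |qbar| ≤ pbar
    have habs := abs_le.1 h2
    have hpb0 : 0 ≤ pbar := le_trans (abs_nonneg qbar) h2
    have hqlt : qbar < pbar := by
      by_contra hc
      push_neg at hc
      exact h1 (max_le_iff.2 ⟨hc, by nlinarith⟩)
    have hs0 : 0 ≤ (pbar + qbar) / 2 := by linarith [habs.1]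
    constructor
    · simp only [max_le_iff]
      constructor
      · exact le_refl _
      · nlinarith
    · intro p q hpq
      have hpq' : p ≤ q := le_trans (le_max_left _ _) hpq
      simp only
      apply proj_aux
      have : ((pbar + qbar)/2 - pbar) * (p - (pbar + qbar)/2) +
          ((pbar + qbar)/2 - qbar) * (q - (pbar + qbar)/2)
          = (pbar - qbar)/2 * (q - p) := by ring
      rw [this]
      apply mul_nonneg (by linarith) (by linarith)
  · -- case 3
    obtain ⟨h3a, h3b⟩ := h3
    set t : ℝ := (pbar + α * qbar) / (1 + α ^ 2) with ht
    have ht0 : t ≤ 0 := by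
      rw [ht]
      apply div_nonpos_of_nonpos_of_nonneg <;> linarith
    have hw2 : α * (pbar + α * qbar) / (1 + α ^ 2) = α * t := by
      rw [ht, mul_div_assoc]
    constructor
    · simp only [hw2, max_le_iff]
      exact ⟨by nlinarith, le_refl _⟩
    · intro p q hpq
      have hap : α * p ≤ q := le_trans (le_max_right _ _) hpq
      simp only [hw2]
      apply proj_aux
      have key : (t - pbar) * (p - t) + (α * t - qbar) * (q - α * t)
          = ((α * pbar - qbar) / (1 + α ^ 2)) * (q - α * p) := by
        rw [ht]; field_simp; ring
      rw [key]
      apply mul_nonneg (div_nonneg (by linarith) (by linarith)) (by linarith)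
  · -- case 4 : project to the origin
    push_neg at h1 h2 h3
    have hq3 : qbar ≤ α * pbar := by
      by_contra hc'
      push_neg at hc'
      rcases lt_max_iff.1 h1 with hc | hc
      · have hpb0 : 0 < pbar := by nlinarith
        have hq0 : 0 < qbar := by nlinarith
        rw [abs_of_pos hq0] at h2
        linarith
      · linarith
    have hpa : -(α * qbar) < pbar := h3 hq3
    have hsum : pbar + qbar ≤ 0 := by
      by_contra hs
      push_neg at hs
      rcases le_or_gt qbar 0 with hq | hq
      · rw [abs_of_nonpos hq] at h2; linarith
      · rw [abs_of_pos hq] at h2; nlinarith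
    have hq0 : qbar ≤ 0 := by nlinarith
    constructor
    · simp
    · intro p q hpq
      have hp : p ≤ q := le_trans (le_max_left _ _) hpq
      have hap : α * p ≤ q := le_trans (le_max_right _ _) hpq
      simp only
      apply proj_aux
      rcases le_or_gt 0 p with hp0 | hp0
      · nlinarith [mul_nonneg hp0 (show 0 ≤ -pbar - qbar by linarith),
          mul_nonneg (show 0 ≤ -qbar by linarith) (show 0 ≤ q - p by linarith)]
      · nlinarith [mul_nonneg (show 0 ≤ -qbar by linarith) (show 0 ≤ q - α*p by linarith),
          mul_pos (show 0 < pbar + α*qbar by linarith) (show 0 < -p by linarith)]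
end

section
/- Let V0 : ℝⁿ → ℝᵈ and B := W1∘P : ℝᵈ → ℝᵏ be bounded linear operators, and K : ℝⁿ × ℝᵈ → ℝᵈ × ℝᵈ × ℝᵏ be K(x,z) = (V0 x, z, B z). Given c1, c2 > 0, define σ1 = c1/‖V0‖², σ2 = c2/‖B‖², τ1 = 1/(σ1‖V0‖²), τ2 = 1/(σ1 + σ2‖B‖²). With diagonal step matrices T = diag(τ1 I, τ2 I) and S = diag(σ1 I, σ1 I, σ2 I), one has ‖S^{1/2} K T^{1/2} u‖² ≤ ‖u‖² for all u = (x,z), i.e., ‖S^{1/2} K T^{1/2}‖ ≤ 1. -/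
/-- Step-size feasibility for the denoising/inpainting PDHG (Appendix B.2): with
`σ1 = c1/‖V0‖²`, `σ2 = c2/‖B‖²`, `τ1 = 1/(σ1‖V0‖²)`, `τ2 = 1/(σ1 + σ2‖B‖²)`, one has
`‖S^{1/2} K T^{1/2} (x,z)‖² = σ1τ1‖V0 x‖² + σ1τ2‖z‖² + σ2τ2‖B z‖² ≤ ‖x‖² + ‖z‖²`. -/
theorem pdhg_stepsize_bound {n d k : ℕ}
    (V0 : EuclideanSpace ℝ (Fin n) →L[ℝ] EuclideanSpace ℝ (Fin d))
    (B : EuclideanSpace ℝ (Fin d) →L[ℝ] EuclideanSpace ℝ (Fin k))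
    (hV0 : V0 ≠ 0) (hB : B ≠ 0)
    (c1 c2 : ℝ) (hc1 : 0 < c1) (hc2 : 0 < c2) :
    let σ1 : ℝ := c1 / ‖V0‖ ^ 2
    let σ2 : ℝ := c2 / ‖B‖ ^ 2
    let τ1 : ℝ := 1 / (σ1 * ‖V0‖ ^ 2)
    let τ2 : ℝ := 1 / (σ1 + σ2 * ‖B‖ ^ 2)
    ∀ (x : EuclideanSpace ℝ (Fin n)) (z : EuclideanSpace ℝ (Fin d)),
      σ1 * τ1 * ‖V0 x‖ ^ 2 + σ1 * τ2 * ‖z‖ ^ 2 + σ2 * τ2 * ‖B z‖ ^ 2 ≤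
        ‖x‖ ^ 2 + ‖z‖ ^ 2 := by
  intro σ1 σ2 τ1 τ2 x z
  have ha : (0:ℝ) < ‖V0‖ := norm_pos_iff.mpr hV0
  have hb : (0:ℝ) < ‖B‖ := norm_pos_iff.mpr hB
  have hσ1 : 0 < σ1 := div_pos hc1 (by positivity)
  have hσ2 : 0 < σ2 := div_pos hc2 (by positivity)
  have hden : 0 < σ1 + σ2 * ‖B‖ ^ 2 := by positivity
  have hτ2 : 0 < τ2 := by simpa [τ2] using one_div_pos.mpr hden
  have h1 : ‖V0 x‖ ≤ ‖V0‖ * ‖x‖ := V0.le_opNorm x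
  have h2 : ‖B z‖ ≤ ‖B‖ * ‖z‖ := B.le_opNorm z
  have h1' : ‖V0 x‖ ^ 2 ≤ ‖V0‖ ^ 2 * ‖x‖ ^ 2 := by
    have := mul_self_le_mul_self (norm_nonneg _) h1
    nlinarith [norm_nonneg (V0 x), norm_nonneg x]
  have h2' : ‖B z‖ ^ 2 ≤ ‖B‖ ^ 2 * ‖z‖ ^ 2 := by
    nlinarith [norm_nonneg (B z), norm_nonneg z]
  have e1 : σ1 * τ1 = 1 / ‖V0‖ ^ 2 := by
    field_simp [τ1]
    rw [show τ1 = 1 / (σ1 * ‖V0‖ ^ 2) from rfl]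
    field_simp
  have key1 : σ1 * τ1 * ‖V0 x‖ ^ 2 ≤ ‖x‖ ^ 2 := by
    rw [e1]
    rw [div_mul_eq_mul_div, div_le_iff₀ (by positivity)]
    nlinarith
  have e2 : τ2 * (σ1 + σ2 * ‖B‖ ^ 2) = 1 := by
    field_simp [τ2]
    rw [show τ2 = 1 / (σ1 + σ2 * ‖B‖ ^ 2) from rfl]
    field_simp
  have key2 : σ1 * τ2 * ‖z‖ ^ 2 + σ2 * τ2 * ‖B z‖ ^ 2 ≤ ‖z‖ ^ 2 := by
    nlinarith [mul_le_mul_of_nonneg_left h2' (mul_nonneg hσ2.le hτ2.le),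
      mul_nonneg hσ1.le hτ2.le, sq_nonneg ‖z‖]
  linarith
end
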